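/- Let k be a field and let d ≥ r ≥ 1 be integers. Let φ : k[t]^{d+1} → k[t]^{d−r+1} be the k[t]-linear map defined on the standard basis e_0,…,e_d of the source and e'_0,…,e'_{d−r} of the target by φ(e_j) = Σ_k C(r,k)·t^{r−k}·e'_{j−k}, the sum over those integers k with 0 ≤ k ≤ r and 0 ≤ j−k ≤ d−r. Then the kernel of φ is a free k[t]-module of rank r with basis f_0,…,f_{r−1}, where f_i = Σ_{j=i}^{d} (−1)^{j−i} C(r+j−i−1, j−i) · t^{j−i} · e_j for i = 0,…,r−1. -/

import Mathlib

noncomputable section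

/-- The matrix of the map `φ : k[t]^{d+1} → k[t]^{d-r+1}`,
`φ(e_j) = Σ_m C(r,m)·t^{r-m}·e'_{j-m}` (sum over `0 ≤ m ≤ r`, `0 ≤ j-m ≤ d-r`);
its `(i',j)` entry is `C(r, j-i')·t^{r-(j-i')}` if `i' ≤ j ≤ i'+r` and `0` otherwise. -/
def phiMat (k : Type) [Field k] (d r : ℕ) :
    Matrix (Fin (d - r + 1)) (Fin (d + 1)) (Polynomial k) :=
  fun i' j =>
    if (i' : ℕ) ≤ (j : ℕ) ∧ (j : ℕ) ≤ (i' : ℕ) + r then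
      Polynomial.C ((Nat.choose r ((j : ℕ) - (i' : ℕ)) : k)) *
        Polynomial.X ^ (r - ((j : ℕ) - (i' : ℕ)))
    else 0

/-- The `k[t]`-linear map `φ : k[t]^{d+1} → k[t]^{d-r+1}`. -/
def phiMap (k : Type) [Field k] (d r : ℕ) :
    (Fin (d + 1) → Polynomial k) →ₗ[Polynomial k] (Fin (d - r + 1) → Polynomial k) :=
  (phiMat k d r).mulVecLin

/-- The claimed basis of the kernel:
`f_i = Σ_{j=i}^d (-1)^{j-i} C(r+j-i-1, j-i) · t^{j-i} · e_j`. -/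
def fKer (k : Type) [Field k] (d r : ℕ) : Fin r → (Fin (d + 1) → Polynomial k) :=
  fun i j =>
    if (i : ℕ) ≤ (j : ℕ) then
      Polynomial.C ((-1 : k) ^ ((j : ℕ) - (i : ℕ)) *
          (Nat.choose (r + ((j : ℕ) - (i : ℕ)) - 1) ((j : ℕ) - (i : ℕ)) : k)) *
        Polynomial.X ^ ((j : ℕ) - (i : ℕ))
    else 0

end


open Finset Polynomial in
private lemma coeff_one_sub_X_pow_int (r n : ℕ) :
    (PowerSeries.coeff (R := ℤ) n) ((1 - PowerSeries.X) ^ r) = (-1) ^ n * (r.choose n : ℤ) := by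
  have h1 : ((1 : Polynomial ℤ) - Polynomial.X : Polynomial ℤ)
      = Polynomial.C (-1) * (Polynomial.X + Polynomial.C (-1)) := by
    simp [Polynomial.C_neg]; ring
  have h2 : ((1 - PowerSeries.X : PowerSeries ℤ) ^ r)
      = (((1 - Polynomial.X : Polynomial ℤ) ^ r : Polynomial ℤ) : PowerSeries ℤ) := by
    rw [Polynomial.coe_pow, Polynomial.coe_sub, Polynomial.coe_one, Polynomial.coe_X]
  rw [h2, Polynomial.coeff_coe, h1, mul_pow, ← Polynomial.C_pow, Polynomial.coeff_C_mul,
    Polynomial.coeff_X_add_C_pow]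
  rcases le_or_gt n r with h | h
  · have : (-1 : ℤ) ^ r = (-1) ^ (r - n) * (-1) ^ n := by
      rw [← pow_add]; congr 1; omega
    rw [this]
    ring_nf
    have h4 : ((-1 : ℤ) ^ (r - n)) ^ 2 = 1 := by
      rw [← pow_mul, mul_comm, pow_mul, neg_one_sq, one_pow]
    simp [pow_mul, h4]
  · rw [Nat.choose_eq_zero_of_lt h]
    simp

open Finset Polynomial in
private lemma sum_neg_one_pow_choose_eq_zero (r N : ℕ) (hr : 1 ≤ r) (hN : 1 ≤ N) :
    ∑ k ∈ range (N + 1), (-1 : ℤ) ^ k * (r.choose (N - k) : ℤ) * ((r - 1 + k).choose (r - 1) : ℤ)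
      = 0 := by
  have key : ((1 - PowerSeries.X : PowerSeries ℤ) ^ r) * (PowerSeries.invOneSubPow ℤ r).val = 1 := by
    rw [← PowerSeries.invOneSubPow_inv_eq_one_sub_pow]
    exact (PowerSeries.invOneSubPow ℤ r).inv_val
  have h2 := congrArg (PowerSeries.coeff (R := ℤ) N) key
  rw [PowerSeries.coeff_mul, PowerSeries.coeff_one, if_neg (by omega),
    PowerSeries.invOneSubPow_val_eq_mk_sub_one_add_choose_of_pos _ _ hr,
    Finset.Nat.sum_antidiagonal_eq_sum_range_succ_mk] at h2
  simp only [coeff_one_sub_X_pow_int, PowerSeries.coeff_mk] at h2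
  -- h2 : ∑ k in range (N+1), (-1)^k * C(r,k) * C(r-1+(N-k), r-1) = 0
  calc ∑ k ∈ range (N + 1), (-1 : ℤ) ^ k * (r.choose (N - k) : ℤ) * ((r - 1 + k).choose (r - 1) : ℤ)
      = ∑ k ∈ range (N + 1), (-1 : ℤ) ^ N * ((-1) ^ k * (r.choose k : ℤ) * ((r - 1 + (N - k)).choose (r - 1) : ℤ)) := by
        rw [← Finset.sum_range_reflect]
        refine Finset.sum_congr rfl fun k hk => ?_
        rw [Finset.mem_range] at hk
        have hk' : k ≤ N := by omega
        have h3 : N + 1 - 1 - k = N - k := by omega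
        rw [h3]
        have h4 : N - (N - k) = k := by omega
        rw [h4]
        have h5 : (-1 : ℤ) ^ (N - k) = (-1) ^ N * (-1) ^ k := by
          have : (-1 : ℤ) ^ N = (-1) ^ (N - k) * (-1) ^ k := by
            rw [← pow_add]; congr 1; omega
          rw [this, mul_assoc, ← pow_add, ← two_mul, pow_mul, neg_one_sq, one_pow, mul_one]
        rw [h5]; ring
    _ = (-1 : ℤ) ^ N * ∑ k ∈ range (N + 1), ((-1) ^ k * (r.choose k : ℤ) * ((r - 1 + (N - k)).choose (r - 1) : ℤ)) := by
        rw [Finset.mul_sum]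
    _ = 0 := by rw [h2, mul_zero]

open Finset Polynomial in
private lemma key_scalar_identity (r i i' : ℕ) (hr : 1 ≤ r) (hi : i < r) :
    ∑ j ∈ Finset.Icc (max i i') (i' + r),
      (-1 : ℤ) ^ (j - i) * (r.choose (j - i') : ℤ) * ((r + (j - i) - 1).choose (j - i) : ℤ)
      = 0 := by
  have step1 : ∑ j ∈ Finset.Icc (max i i') (i' + r),
      (-1 : ℤ) ^ (j - i) * (r.choose (j - i') : ℤ) * ((r + (j - i) - 1).choose (j - i) : ℤ)
      = ∑ j ∈ Finset.Icc (max i i') (i' + r),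
        (-1 : ℤ) ^ (j - i) * (r.choose (i' + r - j) : ℤ) * ((r - 1 + (j - i)).choose (r - 1) : ℤ) := by
    refine Finset.sum_congr rfl fun j hj => ?_
    rw [Finset.mem_Icc] at hj
    have h1 : i' ≤ j := le_trans (le_max_right _ _) hj.1
    have h2 : i ≤ j := le_trans (le_max_left _ _) hj.1
    have e1 : (r.choose (j - i') : ℤ) = (r.choose (i' + r - j) : ℤ) := by
      have := Nat.choose_symm (n := r) (k := j - i') (by omega)
      rw [show r - (j - i') = i' + r - j by omega] at this
      rw [this]
    have e2 : ((r + (j - i) - 1).choose (j - i) : ℤ) = ((r - 1 + (j - i)).choose (r - 1) : ℤ) := by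
      have := Nat.choose_symm (n := r - 1 + (j - i)) (k := j - i) (by omega)
      rw [show r - 1 + (j - i) - (j - i) = r - 1 by omega] at this
      rw [show r + (j - i) - 1 = r - 1 + (j - i) by omega, this]
    rw [e1, e2]
  rw [step1]
  rw [Finset.sum_subset (Finset.Icc_subset_Icc_left (le_max_left i i'))
    (fun j hj hj2 => by
      rw [Finset.mem_Icc] at hj
      rw [Finset.mem_Icc, not_and_or] at hj2
      have : j < i' := by omega
      rw [Nat.choose_eq_zero_of_lt (by omega : r < i' + r - j)]
      push_cast; ring)]
  rw [← Finset.Ico_add_one_right_eq_Icc, Finset.sum_Ico_eq_sum_range]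
  have hN : i' + r + 1 - i = (i' + r - i) + 1 := by omega
  rw [hN]
  have := sum_neg_one_pow_choose_eq_zero r (i' + r - i) hr (by omega)
  rw [← this]
  refine Finset.sum_congr rfl fun k hk => ?_
  rw [Finset.mem_range] at hk
  rw [show i + k - i = k by omega, show i' + r - (i + k) = i' + r - i - k by omega]

open Finset Polynomial in
private lemma phi_f_eq_zero (k : Type) [Field k] (d r : ℕ) (hr : 1 ≤ r) (hd : r ≤ d) (i : Fin r) :
    phiMap k d r (fKer k d r i) = 0 := by
  funext i'
  have ha : (i' : ℕ) ≤ d - r := by omega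
  obtain ⟨a, hav⟩ : ∃ a, a = (i' : ℕ) := ⟨_, rfl⟩
  obtain ⟨b, hbv⟩ : ∃ b, b = (i : ℕ) := ⟨_, rfl⟩
  rw [← hav] at ha
  have hb : b < r := hbv ▸ i.isLt
  -- the summand as a function of natural numbers
  set F : ℕ → Polynomial k := fun jv =>
    if (a ≤ jv ∧ jv ≤ a + r) ∧ b ≤ jv then
      Polynomial.C ((r.choose (jv - a) : k) *
        ((-1 : k) ^ (jv - b) * ((r + (jv - b) - 1).choose (jv - b) : k))) *
        Polynomial.X ^ (a + r - b)
    else 0 with hF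
  have hterm : ∀ j : Fin (d + 1), phiMat k d r i' j * fKer k d r i j = F (j : ℕ) := by
    intro j
    simp only [phiMat, fKer, hF, ← hav, ← hbv]
    by_cases h1 : a ≤ (j : ℕ) ∧ (j : ℕ) ≤ a + r
    · by_cases h2 : b ≤ (j : ℕ)
      · rw [if_pos h1, if_pos h2, if_pos ⟨h1, h2⟩]
        rw [mul_mul_mul_comm, ← Polynomial.C_mul, ← pow_add]
        congr 2
        omega
      · rw [if_pos h1, if_neg h2,
          if_neg (show ¬((a ≤ (j:ℕ) ∧ (j:ℕ) ≤ a + r) ∧ b ≤ (j:ℕ)) by tauto), mul_zero]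
    · rw [if_neg h1,
        if_neg (show ¬((a ≤ (j:ℕ) ∧ (j:ℕ) ≤ a + r) ∧ b ≤ (j:ℕ)) by tauto), zero_mul]
  have hsum : phiMap k d r (fKer k d r i) i' = ∑ jv ∈ Finset.range (d + 1), F jv := by
    rw [phiMap, Matrix.mulVecLin_apply, Matrix.mulVec, dotProduct,
      ← Fin.sum_univ_eq_sum_range]
    exact Finset.sum_congr rfl fun j _ => hterm j
  rw [Pi.zero_apply, hsum]
  have hsub : Finset.Icc (max b a) (a + r) ⊆ Finset.range (d + 1) := by
    intro x hx
    rw [Finset.mem_Icc] at hx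
    rw [Finset.mem_range]
    omega
  rw [← Finset.sum_subset hsub (fun x hx hx2 => by
    rw [Finset.mem_range] at hx
    rw [Finset.mem_Icc] at hx2
    rw [hF]
    exact if_neg (by omega))]
  have hpos : ∀ jv ∈ Finset.Icc (max b a) (a + r), F jv =
      Polynomial.C ((r.choose (jv - a) : k) *
        ((-1 : k) ^ (jv - b) * ((r + (jv - b) - 1).choose (jv - b) : k))) *
        Polynomial.X ^ (a + r - b) := by
    intro jv hjv
    rw [Finset.mem_Icc] at hjv
    rw [hF]
    exact if_pos (by omega)
  rw [Finset.sum_congr rfl hpos, ← Finset.sum_mul, ← map_sum]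
  have hz : (∑ jv ∈ Finset.Icc (max b a) (a + r),
      ((r.choose (jv - a) : k) *
        ((-1 : k) ^ (jv - b) * ((r + (jv - b) - 1).choose (jv - b) : k)))) = 0 := by
    have hcast : (∑ jv ∈ Finset.Icc (max b a) (a + r),
        ((r.choose (jv - a) : k) *
          ((-1 : k) ^ (jv - b) * ((r + (jv - b) - 1).choose (jv - b) : k))))
        = ((∑ j ∈ Finset.Icc (max b a) (a + r),
            (-1 : ℤ) ^ (j - b) * (r.choose (j - a) : ℤ) * ((r + (j - b) - 1).choose (j - b) : ℤ) : ℤ) : k) := by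
      push_cast
      exact Finset.sum_congr rfl fun j _ => by ring
    rw [hcast, key_scalar_identity r b a hr hb, Int.cast_zero]
  rw [hz, map_zero, zero_mul]

section auxmain
open Finset Polynomial
variable (k : Type) [Field k] (d r : ℕ)


lemma fKer_of_lt (i : Fin r) (j : Fin (d + 1)) (h : (j : ℕ) < (i : ℕ)) :
    fKer k d r i j = 0 := by
  rw [fKer]; exact if_neg (by omega)

lemma fKer_diag (i : Fin r) (j : Fin (d + 1)) (h : (j : ℕ) = (i : ℕ)) :
    fKer k d r i j = 1 := by
  rw [fKer, if_pos (le_of_eq h.symm)]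
  simp [h]

/-- The triangular coordinate matrix. -/
noncomputable def Tmat (hd : r ≤ d) : Matrix (Fin r) (Fin r) (Polynomial k) :=
  fun j i => fKer k d r i (Fin.castLE (by omega) j)

lemma Tmat_det (hd : r ≤ d) : (Tmat k d r hd).det = 1 := by
  have htri : (Tmat k d r hd).BlockTriangular OrderDual.toDual := by
    intro p q h
    exact fKer_of_lt k d r q _ (by simpa using h)
  rw [Matrix.det_of_lowerTriangular _ htri]
  rw [Finset.prod_eq_one]
  intro p _
  exact fKer_diag k d r p _ rfl

lemma Tmat_mulVec (hd : r ≤ d) (g : Fin r → Polynomial k) (j : Fin r) :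
    (Tmat k d r hd).mulVec g j = (∑ i, g i • fKer k d r i) (Fin.castLE (by omega) j) := by
  rw [Matrix.mulVec, dotProduct, Finset.sum_apply]
  refine Finset.sum_congr rfl fun i _ => ?_
  rw [Pi.smul_apply, smul_eq_mul, Tmat, mul_comm]

lemma Tmat_inj (hd : r ≤ d) (g : Fin r → Polynomial k) (h : (Tmat k d r hd).mulVec g = 0) :
    g = 0 := by
  have hu : IsUnit (Tmat k d r hd).det := by rw [Tmat_det]; exact isUnit_one
  have := congrArg ((Tmat k d r hd)⁻¹.mulVec) h
  rw [Matrix.mulVec_mulVec, Matrix.nonsing_inv_mul _ hu, Matrix.one_mulVec,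
    Matrix.mulVec_zero] at this
  exact this

lemma echelon (hr : 1 ≤ r) (hd : r ≤ d) (v : Fin (d + 1) → Polynomial k)
    (hv : phiMap k d r v = 0) (h0 : ∀ j : Fin (d + 1), (j : ℕ) < r → v j = 0) : v = 0 := by
  have H : ∀ n : ℕ, ∀ j : Fin (d + 1), (j : ℕ) = n → v j = 0 := by
    intro n
    induction n using Nat.strong_induction_on with
    | _ n IH =>
      intro j hj
      by_cases hn : n < r
      · exact h0 j (by omega)
      · have hnd : n ≤ d := by have := j.isLt; omega
        have hi' : n - r < d - r + 1 := by omega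
        have hφ := congrFun hv ⟨n - r, hi'⟩
        rw [phiMap, Matrix.mulVecLin_apply, Matrix.mulVec, dotProduct,
          Pi.zero_apply] at hφ
        have hsum : ∑ j' : Fin (d + 1), phiMat k d r ⟨n - r, hi'⟩ j' * v j'
            = phiMat k d r ⟨n - r, hi'⟩ j * v j := by
          refine Finset.sum_eq_single_of_mem j (Finset.mem_univ j) fun j' _ hne => ?_
          by_cases hc : (n - r : ℕ) ≤ (j' : ℕ) ∧ (j' : ℕ) ≤ (n - r) + r
          · have hlt : (j' : ℕ) < n := by
              have : (j' : ℕ) ≠ n := fun hh => hne (Fin.ext (by omega))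
              omega
            rw [IH (j' : ℕ) hlt j' rfl, mul_zero]
          · rw [phiMat, if_neg hc, zero_mul]
        rw [hsum, phiMat, if_pos (by simp; omega)] at hφ
        have he : (j : ℕ) - ((⟨n - r, hi'⟩ : Fin (d - r + 1)) : ℕ) = r := by simp; omega
        rw [he] at hφ
        simpa using hφ
  funext j
  exact H (j : ℕ) j rfl

end auxmain

/-- Lemma 3.3: for `d ≥ r ≥ 1`, the kernel of `φ` is the free `k[t]`-module of
rank `r` with basis `f_0, …, f_{r-1}`. -/
theorem statement15 (k : Type) [Field k] (d r : ℕ) (hr : 1 ≤ r) (hd : r ≤ d) :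
    LinearMap.ker (phiMap k d r) =
        Submodule.span (Polynomial k) (Set.range (fKer k d r)) ∧
      LinearIndependent (Polynomial k) (fKer k d r) := by
  constructor
  · apply le_antisymm
    · intro v hv
      rw [LinearMap.mem_ker] at hv
      set T := Tmat k d r hd with hT
      set w : Fin r → Polynomial k := fun j => v (Fin.castLE (by omega) j) with hw
      set c : Fin r → Polynomial k := T⁻¹.mulVec w with hc
      have hu : IsUnit T.det := by rw [hT, Tmat_det]; exact isUnit_one
      set u : Fin (d + 1) → Polynomial k := ∑ i, c i • fKer k d r i with hu2
      have huker : phiMap k d r u = 0 := by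
        rw [hu2, map_sum]
        refine Finset.sum_eq_zero fun i _ => ?_
        rw [map_smul, phi_f_eq_zero k d r hr hd i, smul_zero]
      have hTc : T.mulVec c = w := by
        rw [hc, Matrix.mulVec_mulVec, Matrix.mul_nonsing_inv _ hu, Matrix.one_mulVec]
      have hvu : v - u = 0 := by
        apply echelon k d r hr hd _ (by rw [map_sub, hv, huker, sub_zero])
        intro j hj
        have hj' : (j : ℕ) < r := hj
        have hjj : (Fin.castLE (show r ≤ d + 1 by omega) ⟨(j : ℕ), hj'⟩) = j :=
          Fin.ext rfl
        have hthis : u j = w ⟨(j : ℕ), hj'⟩ := by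
          have h5 := Tmat_mulVec k d r hd c ⟨(j : ℕ), hj'⟩
          rw [hTc] at h5
          rw [hu2]
          exact h5.symm
        rw [Pi.sub_apply, hthis, sub_eq_zero]
        show v j = v (Fin.castLE (by omega) ⟨(j : ℕ), hj'⟩)
        congr 1
      have : v = u := by rwa [sub_eq_zero] at hvu
      rw [this, hu2]
      exact Submodule.sum_smul_mem _ _ fun i _ =>
        Submodule.subset_span (Set.mem_range_self i)
    · rw [Submodule.span_le]
      rintro x ⟨i, rfl⟩
      rw [SetLike.mem_coe, LinearMap.mem_ker]
      exact phi_f_eq_zero k d r hr hd i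
  · rw [Fintype.linearIndependent_iff]
    intro g hg i
    have hT : (Tmat k d r hd).mulVec g = 0 := by
      funext j
      rw [Tmat_mulVec k d r hd g j, hg]
      simp
    have := Tmat_inj k d r hd g hT
    simpa using congrFun this i
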